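/- Let L̃ = D̃ − Ã be the Laplacian of a graph with self-loops, where à = A + I and D̃ is the degree matrix of Ã. Define the smoothing loss Q(U) = tr(Uᵀ D̃^{-1/2} L̃ D̃^{-1/2} U) for U ∈ ℝ^{n×d}. Then the gradient descent step U' = U − (1/2)·∇Q(U) equals U' = (D̃^{-1/2} Ã D̃^{-1/2}) U, i.e., one graph convolution step is gradient descent on Q with step size 1/2. -/
import Mathlib


open Matrix BigOperators

theorem stmt3 (n d : ℕ) (A : Matrix (Fin n) (Fin n) ℝ)
    (hsym : A.IsSymm) (h01 : ∀ i j, A i j = 0 ∨ A i j = 1)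
    (At Dt Dh : Matrix (Fin n) (Fin n) ℝ)
    (hAt : At = A + 1)
    (hDt : Dt = Matrix.diagonal (fun i => ∑ j, At i j))
    (hDh : Dh = Matrix.diagonal (fun i => 1 / Real.sqrt (∑ j, At i j)))
    (U : Matrix (Fin n) (Fin d) ℝ) :
    U - (1 / 2 : ℝ) • ((2 : ℝ) • (Dh * (Dt - At) * Dh * U)) = Dh * At * Dh * U := by
  have hpos : ∀ i, (0 : ℝ) < ∑ j, At i j := by
    intro i
    have h1 : (1 : ℝ) ≤ At i i := by
      rcases h01 i i with h | h <;> simp [hAt, Matrix.one_apply, h]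
    have h0 : ∀ j ∈ Finset.univ, (0 : ℝ) ≤ At i j := by
      intro j _
      rcases h01 i j with h | h <;>
        simp [hAt, Matrix.one_apply, h] <;> positivity
    calc (0:ℝ) < 1 := one_pos
    _ ≤ At i i := h1
    _ ≤ ∑ j, At i j := Finset.single_le_sum h0 (Finset.mem_univ i)
  have key : Dh * Dt * Dh = 1 := by
    rw [hDh, hDt, Matrix.diagonal_mul_diagonal, Matrix.diagonal_mul_diagonal]
    ext i j
    by_cases hij : i = j
    · subst hij
      have hp := hpos i
      have hs : Real.sqrt (∑ j, At i j) * Real.sqrt (∑ j, At i j) = ∑ j, At i j :=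
        Real.mul_self_sqrt hp.le
      rw [Matrix.diagonal_apply_eq, Matrix.one_apply_eq, div_mul_eq_mul_div, one_mul,
        mul_one_div, div_div, hs, div_self hp.ne']
    · rw [Matrix.diagonal_apply_ne _ hij, Matrix.one_apply_ne hij]
  have expand : Dh * (Dt - At) * Dh * U = Dh * Dt * Dh * U - Dh * At * Dh * U := by
    rw [Matrix.mul_sub, Matrix.sub_mul, Matrix.sub_mul]
  rw [expand, key, Matrix.one_mul, smul_smul]
  norm_num
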